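/- Let V : ℝ → ℝ be convex, 𝔪 = e^{−V(t)} dt, and let Ω = [0, b] with v := 𝔪([0,b]) < ∞. If h₁ := −V'(b) satisfies h₁ ≥ e^{−V(b)}/v, then a contradiction follows; hence −V'(b) < e^{−V(b)}/𝔪([0,b]) whenever −V'(b) > 0. -/

import Mathlib

open MeasureTheory Set intervalIntegral

/-- for `V` convex with `𝔪 = e^{-V}dt` and `Ω = [0,b]`, the slope
`h₁ = -V'(b)`, if positive, is strictly smaller than the boundary density divided by
the mass: `-V'(b) < e^{-V(b)} / 𝔪([0,b])`. -/
theorem boundary_slope_lt_density_over_mass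
    (V V' : ℝ → ℝ) (hV : ConvexOn ℝ Set.univ V)
    (hderiv : ∀ x, HasDerivAt V (V' x) x)
    (b : ℝ) (hb : 0 < b) :
    0 < -V' b →
      -V' b < Real.exp (-V b) / (∫ x in (0 : ℝ)..b, Real.exp (-V x)) := by
  intro hh
  set h : ℝ := -V' b with hhdef
  have hVcont : Continuous V := by
    have : Differentiable ℝ V := fun x => (hderiv x).differentiableAt
    exact this.continuous
  have hcont : Continuous fun x => Real.exp (-V x) := Real.continuous_exp.comp hVcont.neg
  -- tangent line bound
  have key : ∀ x ∈ Set.Icc (0:ℝ) b, Real.exp (-V x) ≤ Real.exp (-V b) * Real.exp (-h * (b - x)) := by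
    intro x hx
    rcases eq_or_lt_of_le hx.2 with heq | hlt
    · subst heq; simp
    · have hslope := hV.slope_le_of_hasDerivAt (Set.mem_univ x) (Set.mem_univ b) hlt (hderiv b)
      rw [slope_def_field] at hslope
      have hbx : 0 < b - x := by linarith
      have : V b - V x ≤ V' b * (b - x) := by
        have := (div_le_iff₀ hbx).mp hslope
        linarith [this]
      have hineq : -V x ≤ -V b + (-h * (b - x)) := by
        simp only [hhdef]; nlinarith
      calc Real.exp (-V x) ≤ Real.exp (-V b + (-h * (b - x))) := Real.exp_le_exp.mpr hineq
        _ = Real.exp (-V b) * Real.exp (-h * (b - x)) := Real.exp_add _ _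
  -- the comparison integrand integrates to e^{-Vb}(1-e^{-hb})/h
  have hFTC : (∫ x in (0:ℝ)..b, Real.exp (-V b) * Real.exp (-h * (b - x)))
      = Real.exp (-V b) * (1 - Real.exp (-h * b)) / h := by
    have hderivG : ∀ x ∈ Set.uIcc (0:ℝ) b,
        HasDerivAt (fun x => Real.exp (-V b) * Real.exp (-h * (b - x)) / h)
          (Real.exp (-V b) * Real.exp (-h * (b - x))) x := by
      intro x _
      have h1 : HasDerivAt (fun x : ℝ => -h * (b - x)) h x := by
        have : HasDerivAt (fun x : ℝ => b - x) (-1) x := (hasDerivAt_id x).const_sub b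
        simpa using this.const_mul (-h)
      have h2 := (h1.exp).const_mul (Real.exp (-V b))
      have h3 := h2.div_const h
      have hne : h ≠ 0 := hh.ne'
      refine h3.congr_deriv ?_
      rw [mul_div_assoc, mul_div_cancel_right₀ _ hne]
    have hInt : ContinuousOn (fun x => Real.exp (-V b) * Real.exp (-h * (b - x)))
        (Set.uIcc (0:ℝ) b) := by fun_prop
    rw [intervalIntegral.integral_eq_sub_of_hasDerivAt hderivG
      (hInt.intervalIntegrable)]
    simp only [sub_self, mul_zero, neg_zero, zero_mul, Real.exp_zero, mul_one, sub_zero]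
    ring
  have hIntV : IntervalIntegrable (fun x => Real.exp (-V x)) volume 0 b :=
    (hcont.intervalIntegrable _ _)
  have hIntG : IntervalIntegrable (fun x => Real.exp (-V b) * Real.exp (-h * (b - x))) volume 0 b := by
    apply Continuous.intervalIntegrable; fun_prop
  have hmono : (∫ x in (0:ℝ)..b, Real.exp (-V x))
      ≤ (∫ x in (0:ℝ)..b, Real.exp (-V b) * Real.exp (-h * (b - x))) := by
    apply intervalIntegral.integral_mono_on hb.le hIntV hIntG
    exact key
  have hbound : (∫ x in (0:ℝ)..b, Real.exp (-V x)) < Real.exp (-V b) / h := by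
    refine lt_of_le_of_lt (hmono.trans_eq hFTC) ?_
    rw [div_lt_div_iff₀ hh hh]
    have : 0 < Real.exp (-h * b) := Real.exp_pos _
    nlinarith [mul_pos (mul_pos (Real.exp_pos (-V b)) this) hh]
  have hIpos : 0 < ∫ x in (0:ℝ)..b, Real.exp (-V x) := by
    apply intervalIntegral.intervalIntegral_pos_of_pos_on hIntV _ hb
    intro x _; exact Real.exp_pos _
  rw [lt_div_iff₀ hIpos]
  calc h * ∫ x in (0:ℝ)..b, Real.exp (-V x) < h * (Real.exp (-V b) / h) := by
        exact mul_lt_mul_of_pos_left hbound hh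
    _ = Real.exp (-V b) := by field_simp
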